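/- Let l ∈ ℕ and p_l(t) = t^(2l+1)·sin(1/t) for t ≠ 0, p_l(0) = 0. The function u(t) = exp(∫₀ᵗ p_l(s) ds) is the unique solution of u'(t) = p_l(t)·u(t) on [-1,1] with u(0) = 1, it is strictly positive on [-1,1], and u' vanishes at infinitely many points in any neighborhood of t = 0 while u' is not identically zero. -/

import Mathlib

theorem stmt_1 (l : ℕ)
    (p : ℝ → ℝ)
    (hp : ∀ t : ℝ, p t = if t = 0 then 0 else t ^ (2 * l + 1) * Real.sin (1 / t))
    (u : ℝ → ℝ)
    (hu : ∀ t : ℝ, u t = Real.exp (∫ s in (0:ℝ)..t, p s)) :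
    (∀ t ∈ Set.Icc (-1:ℝ) 1, HasDerivAt u (p t * u t) t) ∧
    u 0 = 1 ∧
    (∀ v : ℝ → ℝ, (∀ t ∈ Set.Icc (-1:ℝ) 1, HasDerivAt v (p t * v t) t) → v 0 = 1 →
      ∀ t ∈ Set.Icc (-1:ℝ) 1, v t = u t) ∧
    (∀ t ∈ Set.Icc (-1:ℝ) 1, 0 < u t) ∧
    (∀ ε : ℝ, 0 < ε → {t ∈ Set.Ioo (-ε) ε | deriv u t = 0}.Infinite) ∧
    ¬ (∀ t ∈ Set.Icc (-1:ℝ) 1, deriv u t = 0) := by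
  have hp0 : p 0 = 0 := by rw [hp]; simp
  -- continuity of p
  have hpcont : Continuous p := by
    rw [continuous_iff_continuousAt]
    intro x
    rcases eq_or_ne x 0 with rfl | hx
    · rw [ContinuousAt, hp0]
      have h1 : Filter.Tendsto (fun t : ℝ => |t| ^ (2*l+1)) (nhds 0) (nhds 0) := by
        have : Filter.Tendsto (fun t : ℝ => |t| ^ (2*l+1)) (nhds 0) (nhds (|(0:ℝ)| ^ (2*l+1))) := ((continuous_abs.pow (2*l+1)).tendsto (0:ℝ))
        simpa using this
      refine squeeze_zero_norm (fun t => ?_) h1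
      rw [hp t]
      split_ifs with h
      · simp [pow_nonneg (abs_nonneg t)]
      · rw [Real.norm_eq_abs, abs_mul, abs_pow]
        exact mul_le_of_le_one_right (pow_nonneg (abs_nonneg t) _) (Real.abs_sin_le_one _)
    · have hf : ContinuousAt (fun t : ℝ => t ^ (2*l+1) * Real.sin (1 / t)) x := by
        exact (continuousAt_id.pow _).mul
          (Real.continuous_sin.continuousAt.comp (continuousAt_const.div continuousAt_id hx))
      refine hf.congr ?_
      filter_upwards [isOpen_compl_singleton.mem_nhds hx] with t ht
      simp only [Set.mem_compl_iff, Set.mem_singleton_iff] at ht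
      rw [hp t, if_neg ht]
  set F : ℝ → ℝ := fun t => ∫ s in (0:ℝ)..t, p s with hF
  have hFderiv : ∀ t : ℝ, HasDerivAt F (p t) t := fun t =>
    intervalIntegral.integral_hasDerivAt_right (hpcont.intervalIntegrable 0 t)
      (hpcont.stronglyMeasurableAtFilter _ _) hpcont.continuousAt
  have hud : ∀ t : ℝ, HasDerivAt u (p t * u t) t := by
    intro t
    have h := (hFderiv t).exp
    have : u = fun t => Real.exp (F t) := funext hu
    rw [this]
    simpa [mul_comm] using h
  have hupos : ∀ t : ℝ, 0 < u t := fun t => by rw [hu t]; exact Real.exp_pos _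
  have hu0 : u 0 = 1 := by rw [hu]; simp
  have hderiv : ∀ t : ℝ, deriv u t = p t * u t := fun t => (hud t).deriv
  refine ⟨fun t _ => hud t, hu0, ?_, fun t _ => hupos t, ?_, ?_⟩
  · -- uniqueness
    intro v hv hv0 t ht
    set g : ℝ → ℝ := fun t => v t * Real.exp (-(F t)) with hg
    have hgd : ∀ x ∈ Set.Icc (-1:ℝ) 1, HasDerivAt g 0 x := by
      intro x hx
      have h : HasDerivAt (fun y => v y * Real.exp (-F y)) (p x * v x * Real.exp (-F x) + v x * (Real.exp (-F x) * -p x)) x := (hv x hx).mul ((hFderiv x).neg.exp)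
      convert h using 1
      ring
    have hcont : ContinuousOn g (Set.Icc (-1:ℝ) 1) :=
      fun x hx => ((hgd x hx).continuousAt).continuousWithinAt
    have key : ∀ x ∈ Set.Icc (-1:ℝ) 1, g x = g (-1) := by
      refine fun x hx => constant_of_has_deriv_right_zero hcont ?_ x hx
      intro y hy
      exact ((hgd y (Set.mem_Icc_of_Ico hy)).hasDerivWithinAt)
    have h0 : (0:ℝ) ∈ Set.Icc (-1:ℝ) 1 := by norm_num
    have hg0 : g 0 = 1 := by
      simp only [hg, hv0, hF]
      simp
    have : g t = 1 := by rw [key t ht, ← key 0 h0, hg0]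
    have hvt : v t * Real.exp (-(F t)) = 1 := this
    have := congrArg (fun y => y * Real.exp (F t)) hvt
    simp only [one_mul] at this
    rw [mul_assoc, ← Real.exp_add, neg_add_cancel, Real.exp_zero, mul_one] at this
    rw [this, hu t]
  · -- infinitely many zeros
    intro ε hε
    set k : ℕ := ⌈1/ε⌉₊ + 1 with hk
    have hkε : 1/ε < (k:ℝ) := by
      calc 1/ε ≤ (⌈1/ε⌉₊ : ℝ) := Nat.le_ceil _
      _ < k := by push_cast [hk]; linarith
    set f : ℕ → ℝ := fun n => 1 / (((n + k : ℕ) : ℝ) * Real.pi) with hf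
    have hden : ∀ n : ℕ, (0:ℝ) < ((n + k : ℕ) : ℝ) * Real.pi := by
      intro n
      have : (0:ℝ) < ((n + k : ℕ) : ℝ) := by
        have : 0 < n + k := by positivity
        exact_mod_cast this
      positivity
    have hfpos : ∀ n, 0 < f n := fun n => by
      rw [hf]; exact one_div_pos.mpr (hden n)
    have hmem : ∀ n, f n ∈ {t ∈ Set.Ioo (-ε) ε | deriv u t = 0} := by
      intro n
      have hlt : f n < ε := by
        rw [hf]
        rw [div_lt_iff₀ (hden n)]
        have h1 : (1:ℝ)/ε < ((n + k : ℕ):ℝ) := by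
          calc (1:ℝ)/ε < (k:ℝ) := hkε
          _ ≤ ((n + k : ℕ):ℝ) := by push_cast; linarith [Nat.cast_nonneg (α := ℝ) n]
        have h2 : ((n + k : ℕ):ℝ) < ((n + k : ℕ):ℝ) * Real.pi := by
          nlinarith [Real.pi_gt_three, hden n]
        calc (1:ℝ) = (1/ε) * ε := by field_simp
        _ < ((n+k:ℕ):ℝ) * ε := by exact mul_lt_mul_of_pos_right h1 hε
        _ ≤ _ := by nlinarith [Real.pi_gt_three, hε]
      have hderiv0 : deriv u (f n) = 0 := by
        rw [hderiv, hp, if_neg (ne_of_gt (hfpos n))]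
        rw [hf]
        rw [one_div_one_div]
        rw [Real.sin_nat_mul_pi]
        ring
      exact ⟨⟨by linarith [hfpos n], hlt⟩, hderiv0⟩
    have hinj : Function.Injective f := by
      intro m n hmn
      rw [hf] at hmn
      have := (div_eq_div_iff (ne_of_gt (hden m)) (ne_of_gt (hden n))).mp hmn
      simp only [one_mul] at this
      have h2 : ((n + k : ℕ) : ℝ) = ((m + k : ℕ) : ℝ) :=
        mul_right_cancel₀ Real.pi_ne_zero this
      have : n + k = m + k := by exact_mod_cast h2
      omega
    exact Set.infinite_of_injective_forall_mem hinj hmem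
  · -- not identically zero
    intro h
    have hpi := Real.pi_gt_three
    have hmem : (2/Real.pi) ∈ Set.Icc (-1:ℝ) 1 := by
      constructor
      · have : (0:ℝ) < 2/Real.pi := by positivity
        linarith
      · rw [div_le_one (by positivity)]
        linarith
    have := h _ hmem
    rw [hderiv, hp, if_neg (by positivity)] at this
    rw [one_div_div, Real.sin_pi_div_two, mul_one] at this
    have h1 : (0:ℝ) < (2/Real.pi) ^ (2*l+1) := by positivity
    nlinarith [hupos (2/Real.pi), h1]
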